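/- Difference between efficiency bounds with and without one-sided noncompliance information: with R ⟂ (Z,A,Y), p = P(R=1) ∈ (0,1), and R† = R(1−A) + A, one has Var(D*) − Var(D_os) = odds(R=0) · E[ Var(D | A,Y) · 1{A=1} ] ≥ 0, where D* = (R/p)(D − E[D|A,Y]) + E[D|A,Y], D_os = (R†/E(R†|A))(D − E[D|A,Y]) + E[D|A,Y], and odds(R=0) = (1−p)/p. -/

import Mathlib

open MeasureTheory ProbabilityTheory
open scoped ENNReal

/-- The σ-algebra generated by the pair `(A, Y)`. -/
def sigmaAY {Ω : Type*} (A Y : Ω → ℝ) : MeasurableSpace Ω :=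
  MeasurableSpace.comap (fun ω => (A ω, Y ω)) inferInstance

/-- The conditional variance `Var(D | A,Y) = E[D² | A,Y] − E[D | A,Y]²`. -/
noncomputable def condVarAY {Ω : Type*} [MeasurableSpace Ω] (μ : MeasureTheory.Measure Ω)
    (A Y D : Ω → ℝ) : Ω → ℝ :=
  fun ω => (μ[fun ω' => D ω' ^ 2 | sigmaAY A Y]) ω - ((μ[D | sigmaAY A Y]) ω) ^ 2

lemma integrable_mul_L2 {Ω : Type*} [MeasurableSpace Ω] {μ : Measure Ω} {f g : Ω → ℝ}
    (hf : MemLp f 2 μ) (hg : MemLp g 2 μ) :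
    Integrable (fun ω => f ω * g ω) μ := by
  have h : MemLp (g • f) 1 μ := hf.smul hg
  have h2 : Integrable (g • f) μ := memLp_one_iff_integrable.mp h
  refine h2.congr (Filter.Eventually.of_forall fun ω => ?_)
  simp [mul_comm]

lemma indepFun_of_measurable_comap {Ω : Type*} [MeasurableSpace Ω] {μ : Measure Ω}
    {β : Type*} [MeasurableSpace β] {R : Ω → ℝ} {T : Ω → β}
    (h : IndepFun R T μ) {X : Ω → ℝ}
    (hX : Measurable[MeasurableSpace.comap T inferInstance] X) : IndepFun R X μ := by
  rw [indepFun_iff_measure_inter_preimage_eq_mul] at h ⊢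
  intro s t hs ht
  obtain ⟨t', ht', heq⟩ := hX ht
  rw [← heq]
  exact h s t' hs ht'

/-- Difference between efficiency bounds with and without one-sided noncompliance
information: with `R ⟂ (Z,A,Y)`, `p = P(R=1) ∈ (0,1)`, `R† = R(1−A) + A`
(so that `E(R†|A) = A + (1−A)p`), one has
`Var(D*) − Var(D_os) = odds(R=0)·E[Var(D|A,Y)·1{A=1}] ≥ 0`, where
`D* = (R/p)(D − E[D|A,Y]) + E[D|A,Y]`,
`D_os = (R†/E(R†|A))(D − E[D|A,Y]) + E[D|A,Y]`, and `odds(R=0) = (1−p)/p`. -/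
theorem stmt17 {Ω : Type*} [MeasurableSpace Ω] (μ : Measure Ω) [IsProbabilityMeasure μ]
    (Z A R Y D : Ω → ℝ)
    (hZm : Measurable Z) (hAm : Measurable A) (hRm : Measurable R) (hYm : Measurable Y)
    (hZbin : ∀ ω, Z ω = 0 ∨ Z ω = 1)
    (hAbin : ∀ ω, A ω = 0 ∨ A ω = 1)
    (hRbin : ∀ ω, R ω = 0 ∨ R ω = 1)
    -- D is a measurable function of (Z, A, Y)
    (hDm : Measurable[MeasurableSpace.comap (fun ω => (Z ω, A ω, Y ω)) inferInstance] D)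
    (hD2 : MemLp D 2 μ) (hDmean : ∫ ω, D ω ∂μ = 0)
    -- MCAR: R independent of (Z, A, Y)
    (hindep : IndepFun R (fun ω => (Z ω, A ω, Y ω)) μ)
    (p : ℝ) (hp : p = (μ {ω | R ω = 1}).toReal) (hppos : 0 < p) (hplt : p < 1)
    (Rdag : Ω → ℝ) (hRdag : Rdag = fun ω => R ω * (1 - A ω) + A ω)
    (Dstar : Ω → ℝ)
    (hDstar : Dstar = fun ω =>
      (R ω / p) * (D ω - (μ[D | sigmaAY A Y]) ω) + (μ[D | sigmaAY A Y]) ω)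
    (Dos : Ω → ℝ)
    (hDos : Dos = fun ω =>
      (Rdag ω / (A ω + (1 - A ω) * p)) * (D ω - (μ[D | sigmaAY A Y]) ω) +
        (μ[D | sigmaAY A Y]) ω) :
    variance Dstar μ - variance Dos μ =
      ((1 - p) / p) * ∫ ω in {ω | A ω = 1}, condVarAY μ A Y D ω ∂μ ∧
    0 ≤ variance Dstar μ - variance Dos μ := by
  have hpne : p ≠ 0 := ne_of_gt hppos
  have hAY_le : sigmaAY A Y ≤ ‹MeasurableSpace Ω› := (hAm.prodMk hYm).comap_le
  haveI hSF : SigmaFinite (μ.trim hAY_le) := inferInstance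
  have hTm : Measurable (fun ω => (Z ω, A ω, Y ω) : Ω → ℝ × ℝ × ℝ) :=
    hZm.prodMk (hAm.prodMk hYm)
  have hG_le : MeasurableSpace.comap (fun ω => (Z ω, A ω, Y ω) : Ω → ℝ × ℝ × ℝ) inferInstance ≤
      ‹MeasurableSpace Ω› := hTm.comap_le
  have hAY_le_G : sigmaAY A Y ≤
      MeasurableSpace.comap (fun ω => (Z ω, A ω, Y ω) : Ω → ℝ × ℝ × ℝ) inferInstance := by
    intro s hs
    obtain ⟨t, ht, rfl⟩ := hs
    exact ⟨Prod.snd ⁻¹' t, measurable_snd ht, rfl⟩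
  set m : Ω → ℝ := μ[D | sigmaAY A Y] with hmdef
  -- m is L2
  have hmL2 : MemLp m 2 μ := by
    have hDi : Integrable D μ := hD2.integrable one_le_two
    have hg_eq : ((condExpL2 ℝ ℝ hAY_le (hD2.toLp D) : Lp ℝ 2 μ) : Ω → ℝ) =ᵐ[μ] m := by
      refine ae_eq_condExp_of_forall_setIntegral_eq hAY_le hDi ?_ ?_ ?_
      · intro s hs hμs
        exact ((Lp.memLp _).integrable one_le_two).integrableOn
      · intro s hs hμs
        rw [integral_condExpL2_eq hAY_le (hD2.toLp D) hs hμs.ne]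
        exact setIntegral_congr_ae (hAY_le s hs) ((hD2.coeFn_toLp).mono fun x hx _ => hx)
      · exact aestronglyMeasurable_condExpL2 hAY_le _
    exact (Lp.memLp _).ae_eq hg_eq
  have hmsm : StronglyMeasurable[sigmaAY A Y] m := stronglyMeasurable_condExp
  set ε : Ω → ℝ := fun ω => D ω - m ω with hεdef
  have hεL2 : MemLp ε 2 μ := hD2.sub hmL2
  -- measurability w.r.t. 𝒢 := comap (Z,A,Y)
  have hTG : Measurable[MeasurableSpace.comap (fun ω => (Z ω, A ω, Y ω) : Ω → ℝ × ℝ × ℝ)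
      inferInstance] (fun ω => (Z ω, A ω, Y ω) : Ω → ℝ × ℝ × ℝ) := fun s hs => ⟨s, hs, rfl⟩
  have hAG : Measurable[MeasurableSpace.comap (fun ω => (Z ω, A ω, Y ω) : Ω → ℝ × ℝ × ℝ)
      inferInstance] A := (measurable_fst.comp measurable_snd).comp hTG
  have hmG : StronglyMeasurable[MeasurableSpace.comap
      (fun ω => (Z ω, A ω, Y ω) : Ω → ℝ × ℝ × ℝ) inferInstance] m := hmsm.mono hAY_le_G
  have hεG : StronglyMeasurable[MeasurableSpace.comap
      (fun ω => (Z ω, A ω, Y ω) : Ω → ℝ × ℝ × ℝ) inferInstance] ε :=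
    (hDm.stronglyMeasurable).sub hmG
  set F1 : Ω → ℝ := fun ω => A ω * (ε ω * m ω) with hF1def
  set F2 : Ω → ℝ := fun ω => A ω * ε ω ^ 2 with hF2def
  set F3 : Ω → ℝ := fun ω => A ω * ε ω with hF3def
  have hAbd : ∃ C, ∀ ω, ‖A ω‖ ≤ C := ⟨1, fun ω => by rcases hAbin ω with h | h <;> simp [h]⟩
  have hRbd : ∃ C, ∀ ω, ‖R ω‖ ≤ C := ⟨1, fun ω => by rcases hRbin ω with h | h <;> simp [h]⟩
  have hAaesm : AEStronglyMeasurable A μ := hAm.aestronglyMeasurable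
  have hεm_int : Integrable (fun ω => ε ω * m ω) μ := integrable_mul_L2 hεL2 hmL2
  have hεsq_int : Integrable (fun ω => ε ω ^ 2) μ := hεL2.integrable_sq
  have hε_int : Integrable ε μ := hεL2.integrable one_le_two
  have hF1int : Integrable F1 μ := hεm_int.bdd_mul hAaesm (ae_of_all _ hAbd.choose_spec)
  have hF2int : Integrable F2 μ := hεsq_int.bdd_mul hAaesm (ae_of_all _ hAbd.choose_spec)
  have hF3int : Integrable F3 μ := hε_int.bdd_mul hAaesm (ae_of_all _ hAbd.choose_spec)
  have hF1G : StronglyMeasurable[MeasurableSpace.comap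
      (fun ω => (Z ω, A ω, Y ω) : Ω → ℝ × ℝ × ℝ) inferInstance] F1 :=
    (hAG.stronglyMeasurable).mul (hεG.mul hmG)
  have hF2G : StronglyMeasurable[MeasurableSpace.comap
      (fun ω => (Z ω, A ω, Y ω) : Ω → ℝ × ℝ × ℝ) inferInstance] F2 :=
    (hAG.stronglyMeasurable).mul (hεG.pow 2)
  have hF3G : StronglyMeasurable[MeasurableSpace.comap
      (fun ω => (Z ω, A ω, Y ω) : Ω → ℝ × ℝ × ℝ) inferInstance] F3 :=
    (hAG.stronglyMeasurable).mul hεG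
  -- key independence identity
  have hRint : ∫ ω, R ω ∂μ = p := by
    have hmeas : MeasurableSet {ω | R ω = 1} := hRm (measurableSet_singleton 1)
    have hR_eq : ∀ ω, R ω = Set.indicator {ω | R ω = 1} (1 : Ω → ℝ) ω := by
      intro ω
      rcases hRbin ω with h | h <;> simp [Set.indicator_apply, h]
    rw [hp]
    calc ∫ ω, R ω ∂μ = ∫ ω, Set.indicator {ω | R ω = 1} (1 : Ω → ℝ) ω ∂μ := by
          exact integral_congr_ae (Filter.Eventually.of_forall hR_eq)
      _ = (μ {ω | R ω = 1}).toReal := by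
          rw [integral_indicator_one hmeas]
          rfl
  have key : ∀ X : Ω → ℝ, StronglyMeasurable[MeasurableSpace.comap
      (fun ω => (Z ω, A ω, Y ω) : Ω → ℝ × ℝ × ℝ) inferInstance] X → Integrable X μ →
      ∫ ω, R ω * X ω ∂μ = p * ∫ ω, X ω ∂μ := by
    intro X hXsm hXint
    have hIF : IndepFun R X μ := indepFun_of_measurable_comap hindep hXsm.measurable
    have h := hIF.integral_fun_mul_eq_mul_integral hRm.aestronglyMeasurable
      ((hXsm.mono hG_le).aestronglyMeasurable)
    rw [← hRint]
    simpa [Pi.mul_apply] using h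
  -- L2 bounds for Dstar, Dos
  have hDstarL2 : MemLp Dstar 2 μ := by
    have hcoef : MemLp (fun ω => R ω / p) ∞ μ := by
      refine memLp_top_of_bound (hRm.div_const p).aestronglyMeasurable (1 / p)
        (Filter.Eventually.of_forall fun ω => ?_)
      rcases hRbin ω with h | h <;>
        simp [h, Real.norm_eq_abs, abs_div, abs_of_pos hppos] <;> positivity
    have h1 : MemLp (fun ω => (R ω / p) * ε ω) 2 μ := by
      have h2 := hεL2.smul (r := 2) hcoef
      exact h2
    have h3 : MemLp (fun ω => (R ω / p) * ε ω + m ω) 2 μ := h1.add hmL2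
    rw [hDstar]
    exact h3
  have hDosL2 : MemLp Dos 2 μ := by
    have hcm : Measurable (fun ω => Rdag ω / (A ω + (1 - A ω) * p)) := by
      rw [hRdag]
      exact ((hRm.mul (measurable_const.sub hAm)).add hAm).div
        (hAm.add ((measurable_const.sub hAm).mul measurable_const))
    have hcoef : MemLp (fun ω => Rdag ω / (A ω + (1 - A ω) * p)) ∞ μ := by
      refine memLp_top_of_bound hcm.aestronglyMeasurable (1 / p)
        (Filter.Eventually.of_forall fun ω => ?_)
      rw [hRdag]
      rcases hAbin ω with h | h <;> rcases hRbin ω with hr | hr <;>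
        simp [h, hr, Real.norm_eq_abs, abs_div, abs_of_pos hppos]
      · positivity
      · rw [← one_div]
        exact (le_div_iff₀ hppos).mpr (by linarith)
      · rw [← one_div]
        exact (le_div_iff₀ hppos).mpr (by linarith)
    have h1 : MemLp (fun ω => (Rdag ω / (A ω + (1 - A ω) * p)) * ε ω) 2 μ := by
      have h2 := hεL2.smul (r := 2) hcoef
      exact h2
    have h3 := h1.add hmL2
    rw [hDos]
    exact h3
  -- pointwise decomposition of the difference
  have hDecomp : ∀ ω, Dstar ω = Dos ω + ((1 / p) * (R ω * F3 ω) - F3 ω) := by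
    intro ω
    rcases hAbin ω with h | h <;>
      simp only [hDstar, hDos, hRdag, hF3def, h] <;> field_simp <;> ring
  have hSq : ∀ ω, Dstar ω ^ 2 - Dos ω ^ 2 =
      (1 / p ^ 2) * (R ω * F2 ω) - F2 ω + ((2 / p) * (R ω * F1 ω) - 2 * F1 ω) := by
    intro ω
    rcases hAbin ω with h | h <;> rcases hRbin ω with hr | hr <;>
      simp only [hDstar, hDos, hRdag, hF1def, hF2def, h, hr] <;> field_simp <;> ring
  -- equal means
  have hRF3int : Integrable (fun ω => R ω * F3 ω) μ := hF3int.bdd_mul hRm.aestronglyMeasurable (ae_of_all _ hRbd.choose_spec)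
  have hRF2int : Integrable (fun ω => R ω * F2 ω) μ := hF2int.bdd_mul hRm.aestronglyMeasurable (ae_of_all _ hRbd.choose_spec)
  have hRF1int : Integrable (fun ω => R ω * F1 ω) μ := hF1int.bdd_mul hRm.aestronglyMeasurable (ae_of_all _ hRbd.choose_spec)
  have hDosInt : Integrable Dos μ := hDosL2.integrable one_le_two
  have haux3 : Integrable (fun ω => (1 / p) * (R ω * F3 ω) - F3 ω) μ :=
    (hRF3int.const_mul _).sub hF3int
  have hmean : ∫ ω, Dstar ω ∂μ = ∫ ω, Dos ω ∂μ := by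
    have he : (fun ω => Dstar ω) = fun ω => Dos ω + ((1 / p) * (R ω * F3 ω) - F3 ω) :=
      funext hDecomp
    calc ∫ ω, Dstar ω ∂μ
        = ∫ ω, Dos ω + ((1 / p) * (R ω * F3 ω) - F3 ω) ∂μ := by rw [← he]
      _ = (∫ ω, Dos ω ∂μ) + ∫ ω, (1 / p) * (R ω * F3 ω) - F3 ω ∂μ :=
          integral_add hDosInt haux3
      _ = ∫ ω, Dos ω ∂μ := by
          rw [integral_sub (hRF3int.const_mul _) hF3int, integral_const_mul, key F3 hF3G hF3int]
          field_simp
          ring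
  -- difference of second moments
  have haux2 : Integrable (fun ω => (1 / p ^ 2) * (R ω * F2 ω) - F2 ω) μ :=
    (hRF2int.const_mul _).sub hF2int
  have haux1 : Integrable (fun ω => (2 / p) * (R ω * F1 ω) - 2 * F1 ω) μ :=
    (hRF1int.const_mul _).sub (hF1int.const_mul _)
  have hsqdiff : (∫ ω, Dstar ω ^ 2 ∂μ) - ∫ ω, Dos ω ^ 2 ∂μ = ((1 - p) / p) * ∫ ω, F2 ω ∂μ := by
    have hi1 : Integrable (fun ω => Dstar ω ^ 2) μ := hDstarL2.integrable_sq
    have hi2 : Integrable (fun ω => Dos ω ^ 2) μ := hDosL2.integrable_sq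
    rw [← integral_sub hi1 hi2]
    have he : (fun ω => Dstar ω ^ 2 - Dos ω ^ 2) = fun ω =>
        ((1 / p ^ 2) * (R ω * F2 ω) - F2 ω) + ((2 / p) * (R ω * F1 ω) - 2 * F1 ω) :=
      funext hSq
    calc ∫ ω, Dstar ω ^ 2 - Dos ω ^ 2 ∂μ
        = ∫ ω, ((1 / p ^ 2) * (R ω * F2 ω) - F2 ω) + ((2 / p) * (R ω * F1 ω) - 2 * F1 ω) ∂μ := by
          rw [← he]
      _ = (∫ ω, (1 / p ^ 2) * (R ω * F2 ω) - F2 ω ∂μ) +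
          ∫ ω, (2 / p) * (R ω * F1 ω) - 2 * F1 ω ∂μ := integral_add haux2 haux1
      _ = ((1 - p) / p) * ∫ ω, F2 ω ∂μ := by
          rw [integral_sub (hRF2int.const_mul _) hF2int,
            integral_sub (hRF1int.const_mul _) (hF1int.const_mul _),
            integral_const_mul, integral_const_mul, integral_const_mul,
            key F2 hF2G hF2int, key F1 hF1G hF1int]
          field_simp
          ring
  -- conditional variance identification
  have hcv : ∫ ω in {ω | A ω = 1}, condVarAY μ A Y D ω ∂μ = ∫ ω, F2 ω ∂μ := by
    have hA1 : MeasurableSet {ω | A ω = 1} := hAm (measurableSet_singleton 1)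
    have hA1AY : MeasurableSet[sigmaAY A Y] {ω | A ω = 1} := by
      refine ⟨Prod.fst ⁻¹' {1}, measurable_fst (measurableSet_singleton 1), ?_⟩
      ext ω; simp
    have hDsq_int : Integrable (fun ω => D ω ^ 2) μ := hD2.integrable_sq
    have hmD_int : Integrable (fun ω => m ω * D ω) μ := integrable_mul_L2 hmL2 hD2
    have hDi : Integrable D μ := hD2.integrable one_le_two
    have hmsq_int : Integrable (fun ω => m ω ^ 2) μ := hmL2.integrable_sq
    have hmsqAY : StronglyMeasurable[sigmaAY A Y] (fun ω => m ω ^ 2) := by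
      have := hmsm.mul hmsm
      simpa [sq] using (show StronglyMeasurable[sigmaAY A Y] (fun ω => m ω * m ω) from this)
    have hpull : μ[(fun ω => m ω * D ω) | sigmaAY A Y] =ᵐ[μ] fun ω => m ω * m ω := by
      have h := condExp_mul_of_stronglyMeasurable_left (μ := μ) hmsm hmD_int hDi
      filter_upwards [h] with ω hω
      exact hω
    have hfix : μ[(fun ω => m ω ^ 2) | sigmaAY A Y] = fun ω => m ω ^ 2 :=
      condExp_of_stronglyMeasurable hAY_le hmsqAY hmsq_int
    have hsub_int : Integrable ((2 : ℝ) • (fun ω => m ω * D ω) - fun ω => m ω ^ 2) μ :=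
      (hmD_int.smul (2 : ℝ)).sub hmsq_int
    have hεsq_eq : (fun ω => ε ω ^ 2) =
        (fun ω => D ω ^ 2) - ((2 : ℝ) • (fun ω => m ω * D ω) - fun ω => m ω ^ 2) := by
      funext ω
      simp only [hεdef, Pi.sub_apply, Pi.smul_apply, smul_eq_mul]
      ring
    have hcond : μ[(fun ω => ε ω ^ 2) | sigmaAY A Y] =ᵐ[μ] condVarAY μ A Y D := by
      rw [hεsq_eq]
      have h1 := condExp_sub (m := sigmaAY A Y) (μ := μ) hDsq_int hsub_int
      have h2 := condExp_sub (m := sigmaAY A Y) (μ := μ) (hmD_int.smul (2 : ℝ)) hmsq_int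
      have h3 := condExp_smul (m := sigmaAY A Y) (μ := μ) (2 : ℝ) (fun ω => m ω * D ω)
      filter_upwards [h1, h2, h3, hpull] with ω hω1 hω2 hω3 hω4
      have hfix' : (μ[(fun ω => m ω ^ 2) | sigmaAY A Y]) ω = m ω ^ 2 := by rw [hfix]
      simp only [Pi.sub_apply, Pi.smul_apply, smul_eq_mul] at hω1 hω2 hω3
      rw [hω1, hω2, hω3, hω4, hfix']
      simp only [condVarAY, hmdef]
      ring
    calc ∫ ω in {ω | A ω = 1}, condVarAY μ A Y D ω ∂μ
        = ∫ ω in {ω | A ω = 1}, (μ[(fun ω => ε ω ^ 2) | sigmaAY A Y]) ω ∂μ := by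
          refine setIntegral_congr_ae hA1 ?_
          filter_upwards [hcond] with ω hω _
          exact hω.symm
      _ = ∫ ω in {ω | A ω = 1}, ε ω ^ 2 ∂μ := setIntegral_condExp hAY_le hεsq_int hA1AY
      _ = ∫ ω, F2 ω ∂μ := by
          rw [← integral_indicator hA1]
          refine integral_congr_ae (Filter.Eventually.of_forall fun ω => ?_)
          rcases hAbin ω with h | h <;> simp [Set.indicator_apply, hF2def, h]
  have hmain : variance Dstar μ - variance Dos μ = ((1 - p) / p) * ∫ ω, F2 ω ∂μ := by
    rw [variance_eq_sub hDstarL2, variance_eq_sub hDosL2]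
    have h1 : μ[Dstar ^ 2] = ∫ ω, Dstar ω ^ 2 ∂μ := rfl
    have h2 : μ[Dos ^ 2] = ∫ ω, Dos ω ^ 2 ∂μ := rfl
    have h3 : μ[Dstar] = ∫ ω, Dstar ω ∂μ := rfl
    have h4 : μ[Dos] = ∫ ω, Dos ω ∂μ := rfl
    rw [h1, h2, h3, h4, hmean]
    linarith [hsqdiff]
  have hF2nonneg : 0 ≤ ∫ ω, F2 ω ∂μ := by
    apply integral_nonneg
    intro ω
    rcases hAbin ω with h | h <;> simp [hF2def, h] <;> positivity
  constructor
  · rw [hmain, hcv]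
  · rw [hmain]
    exact mul_nonneg (div_nonneg (by linarith) hppos.le) hF2nonneg
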